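/- There exist a constant L > 0 and a strictly decreasing sequence d₁ > d₂ > ⋯ of positive real numbers converging to 0 such that for every N ≥ 1 there is a measurable set C ⊆ S¹ with μ(C) ≥ L that avoids the distances in {d₁, …, d_N}. -/

import Mathlib

open MeasureTheory Filter Set Real
open scoped RealInnerProductSpace ENNReal

lemma fract_shift_half (t : ℝ) : Int.fract (t + 1/2) < 1/2 ↔ 1/2 ≤ Int.fract t := by
  have h0 : (0:ℝ) ≤ Int.fract t := Int.fract_nonneg t
  have h1 : Int.fract t < 1 := Int.fract_lt_one t
  have key : Int.fract (t + 1/2) = Int.fract (Int.fract t + 1/2) := by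
    conv_lhs => rw [show t + 1/2 = (⌊t⌋ : ℝ) + (Int.fract t + 1/2) by
      rw [← add_assoc, Int.floor_add_fract]]
    rw [Int.fract_intCast_add]
  rw [key]
  by_cases h : 1/2 ≤ Int.fract t
  · have : Int.fract (Int.fract t + 1/2) = Int.fract t - 1/2 := by
      rw [show Int.fract t + 1/2 = (1:ℤ) + (Int.fract t - 1/2) by push_cast; ring,
        Int.fract_intCast_add, Int.fract_eq_self.mpr ⟨by linarith, by linarith⟩]
    rw [this]; constructor <;> intro <;> linarith
  · push_neg at h
    have : Int.fract (Int.fract t + 1/2) = Int.fract t + 1/2 :=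
      Int.fract_eq_self.mpr ⟨by linarith, by linarith⟩
    rw [this]; constructor <;> intro <;> [linarith; linarith]

lemma arg_exp_mul (u : ℝ) (z : ℂ) (hz : ‖z‖ = 1) :
    ∃ k : ℤ, Complex.arg (Complex.exp (u * Complex.I) * z)
      = Complex.arg z + u + 2 * π * k := by
  have hz0 : z ≠ 0 := by
    intro h; rw [h] at hz; simp at hz
  set w := Complex.exp (u * Complex.I) * z with hw
  have habsw : ‖w‖ = 1 := by
    rw [hw, norm_mul, Complex.norm_exp]
    simp [hz]
  have h1 : Complex.exp (Complex.arg w * Complex.I) = w := by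
    have := Complex.norm_mul_exp_arg_mul_I w
    rwa [habsw, Complex.ofReal_one, one_mul] at this
  have h2 : Complex.exp (Complex.arg z * Complex.I) = z := by
    have := Complex.norm_mul_exp_arg_mul_I z
    rwa [hz, Complex.ofReal_one, one_mul] at this
  have h3 : Complex.exp (Complex.arg w * Complex.I)
      = Complex.exp ((Complex.arg z + u) * Complex.I) := by
    rw [h1, hw]
    conv_lhs => rw [← h2]
    rw [← Complex.exp_add]
    congr 1
    ring
  obtain ⟨n, hn⟩ := Complex.exp_eq_exp_iff_exists_int.mp h3
  refine ⟨n, ?_⟩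
  have him := congrArg Complex.im hn
  simp [Complex.add_im, Complex.mul_im, Complex.mul_re] at him
  linarith [him]

/-- on the unit circle `S¹ ⊆ ℝ²` (with geodesic distance
`arccos ⟪x,y⟫` and the normalized arc-length probability measure `μ`, i.e. the
rotation-invariant probability measure on `S¹`) there are a constant `L > 0`
and a strictly decreasing sequence `d₁ > d₂ > ⋯` of positive reals converging
to `0` such that for every `N ≥ 1` some measurable `C ⊆ S¹` with `μ(C) ≥ L`
avoids the distances `d₁, …, d_N`. -/
theorem circle_no_density_decay
    (μ : Measure (EuclideanSpace ℝ (Fin 2)))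
    (hprob : IsProbabilityMeasure μ)
    (hsupp : μ (Metric.sphere (0 : EuclideanSpace ℝ (Fin 2)) 1)ᶜ = 0)
    (hinv : ∀ f : EuclideanSpace ℝ (Fin 2) ≃ₗᵢ[ℝ] EuclideanSpace ℝ (Fin 2),
      μ.map f = μ) :
    ∃ L : ℝ≥0∞, 0 < L ∧
      ∃ d : ℕ → ℝ,
        (∀ i, 0 < d i) ∧
        (∀ i j, i < j → d j < d i) ∧
        Tendsto d atTop (nhds 0) ∧
        ∀ N : ℕ, 1 ≤ N →
          ∃ C : Set (EuclideanSpace ℝ (Fin 2)),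
            C ⊆ Metric.sphere (0 : EuclideanSpace ℝ (Fin 2)) 1 ∧
            MeasurableSet C ∧
            L ≤ μ C ∧
            (∀ x ∈ C, ∀ y ∈ C, ∀ i, 1 ≤ i → i ≤ N →
              Real.arccos ⟪x, y⟫ ≠ d i) := by
  refine ⟨2⁻¹, by norm_num, fun i => π / 3 ^ i, fun i => by positivity, ?_, ?_, ?_⟩
  · intro i j hij
    have h3 : (3:ℝ) ^ i < 3 ^ j := by
      apply pow_lt_pow_right₀ (by norm_num) hij
    exact div_lt_div_of_pos_left pi_pos (by positivity) h3
  · have h := (tendsto_pow_atTop_nhds_zero_of_lt_one (by norm_num : (0:ℝ) ≤ 3⁻¹)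
      (by norm_num : (3⁻¹:ℝ) < 1)).const_mul π
    rw [mul_zero] at h
    refine h.congr fun i => ?_
    rw [inv_pow, div_eq_mul_inv]
  intro N hN
  set u : ℝ := π / 3 ^ N with hu_def
  have hu : 0 < u := by positivity
  have hπu : π = 3 ^ N * u := by rw [hu_def]; field_simp
  set e := Complex.orthonormalBasisOneI.repr with he_def
  set g : EuclideanSpace ℝ (Fin 2) → ℝ :=
    fun x => Int.fract (Complex.arg (e.symm x) / (2 * u)) with hg_def
  have hg_meas : Measurable g :=
    ((Complex.measurable_arg.comp e.symm.continuous.measurable).div_const (2*u)).fract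
  set S : Set (EuclideanSpace ℝ (Fin 2)) := Metric.sphere 0 1 with hS_def
  set C : Set (EuclideanSpace ℝ (Fin 2)) := S ∩ {x | g x < 1/2} with hC_def
  have hCmeas : MeasurableSet C :=
    (Metric.isClosed_sphere).measurableSet.inter (measurableSet_lt hg_meas measurable_const)
  refine ⟨C, inter_subset_left, hCmeas, ?_, ?_⟩
  · -- measure bound
    set c : Circle := Circle.exp u with hc_def
    set f : EuclideanSpace ℝ (Fin 2) ≃ₗᵢ[ℝ] EuclideanSpace ℝ (Fin 2) :=
      (e.symm.trans (rotation c)).trans e with hf_def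
    have hf_sphere : ∀ x, f x ∈ S ↔ x ∈ S := by
      intro x
      simp only [hS_def, mem_sphere_zero_iff_norm]
      rw [f.norm_map]
    have hgf : ∀ x ∈ S, (g (f x) < 1/2 ↔ 1/2 ≤ g x) := by
      intro x hx
      have hz : ‖e.symm x‖ = 1 := by
        rw [e.symm.norm_map]
        exact mem_sphere_zero_iff_norm.mp hx
      have hesf : e.symm (f x) = Complex.exp (u * Complex.I) * (e.symm x) := by
        simp only [hf_def, LinearIsometryEquiv.trans_apply, LinearIsometryEquiv.symm_apply_apply]
        rw [rotation_apply, hc_def, Circle.coe_exp]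
      obtain ⟨k, hk⟩ := arg_exp_mul u (e.symm x) hz
      have harg : Complex.arg (e.symm (f x)) = Complex.arg (e.symm x) + u + 2 * π * k := by
        rw [hesf]; exact hk
      have hdiv : Complex.arg (e.symm (f x)) / (2 * u)
          = (Complex.arg (e.symm x) / (2 * u) + 1/2) + ((3:ℤ) ^ N * k : ℤ) := by
        rw [harg, hπu]
        push_cast
        field_simp
      have : g (f x) = Int.fract (Complex.arg (e.symm x) / (2 * u) + 1/2) := by
        rw [hg_def]
        simp only
        rw [hdiv, Int.fract_add_intCast]
      rw [this]
      exact fract_shift_half _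
    set C' : Set (EuclideanSpace ℝ (Fin 2)) := S ∩ {x | ¬ (g x < 1/2)} with hC'_def
    have hpre : f ⁻¹' C = C' := by
      ext x
      simp only [hC_def, hC'_def, mem_preimage, mem_inter_iff, mem_setOf_eq]
      constructor
      · rintro ⟨h1, h2⟩
        have hxS : x ∈ S := (hf_sphere x).mp h1
        exact ⟨hxS, fun hlt => absurd ((hgf x hxS).mp h2) (not_le.mpr hlt)⟩
      · rintro ⟨h1, h2⟩
        exact ⟨(hf_sphere x).mpr h1, (hgf x h1).mpr (not_lt.mp h2)⟩
    have hC'meas : MeasurableSet C' :=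
      (Metric.isClosed_sphere).measurableSet.inter
        (measurableSet_lt hg_meas measurable_const).compl
    have hμC' : μ C' = μ C := by
      rw [← hpre, ← Measure.map_apply f.continuous.measurable hCmeas, hinv f]
    have hcover : (univ : Set (EuclideanSpace ℝ (Fin 2))) ⊆ (C ∪ C') ∪ Sᶜ := by
      intro x _
      by_cases hx : x ∈ S
      · by_cases hg2 : g x < 1/2
        · exact Or.inl (Or.inl ⟨hx, hg2⟩)
        · exact Or.inl (Or.inr ⟨hx, hg2⟩)
      · exact Or.inr hx
    have h1 : (1:ℝ≥0∞) ≤ 2 * μ C := by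
      have := measure_mono hcover (μ := μ)
      rw [measure_univ] at this
      calc (1:ℝ≥0∞) ≤ μ ((C ∪ C') ∪ Sᶜ) := this
        _ ≤ μ (C ∪ C') + μ Sᶜ := measure_union_le _ _
        _ = μ (C ∪ C') := by rw [hsupp, add_zero]
        _ ≤ μ C + μ C' := measure_union_le _ _
        _ = 2 * μ C := by rw [hμC', two_mul]
    calc (2⁻¹ : ℝ≥0∞) = 2⁻¹ * 1 := (mul_one _).symm
      _ ≤ 2⁻¹ * (2 * μ C) := mul_le_mul_right h1 _
      _ = μ C := by rw [← mul_assoc, ENNReal.inv_mul_cancel two_ne_zero ENNReal.ofNat_ne_top,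
          one_mul]
  · -- avoidance
    intro x hx y hy i hi1 hiN harc
    have hzx : ‖e.symm x‖ = 1 := by
      rw [e.symm.norm_map]
      exact mem_sphere_zero_iff_norm.mp hx.1
    have hzy : ‖e.symm y‖ = 1 := by
      rw [e.symm.norm_map]
      exact mem_sphere_zero_iff_norm.mp hy.1
    have hzx0 : e.symm x ≠ 0 := by intro h; rw [h] at hzx; simp at hzx
    have hzy0 : e.symm y ≠ 0 := by intro h; rw [h] at hzy; simp at hzy
    set α := Complex.arg (e.symm x) with hα_def
    set β := Complex.arg (e.symm y) with hβ_def
    have hinner : ⟪x, y⟫ = Real.cos (α - β) := by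
      rw [← e.symm.inner_map_map x y, Complex.inner]
      have hre : (e.symm x).re = Real.cos α := by
        rw [hα_def, Complex.cos_arg hzx0, hzx, div_one]
      have him : (e.symm x).im = Real.sin α := by
        rw [hα_def, Complex.sin_arg, hzx, div_one]
      have hre' : (e.symm y).re = Real.cos β := by
        rw [hβ_def, Complex.cos_arg hzy0, hzy, div_one]
      have him' : (e.symm y).im = Real.sin β := by
        rw [hβ_def, Complex.sin_arg, hzy, div_one]
      rw [Real.cos_sub]
      simp only [Complex.mul_re, Complex.conj_re, Complex.conj_im, hre, him, hre', him']
      ring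
    have harc' : Real.arccos ⟪x, y⟫ = π / 3 ^ i := harc
    have hcos : Real.cos (α - β) = Real.cos (π / 3 ^ i) := by
      have h1 : (-1:ℝ) ≤ ⟪x,y⟫ := by rw [hinner]; exact Real.neg_one_le_cos _
      have h2 : ⟪x,y⟫ ≤ 1 := by rw [hinner]; exact Real.cos_le_one _
      have h3 := Real.cos_arccos h1 h2
      rw [harc', hinner] at h3
      exact h3.symm
    obtain ⟨k, hk⟩ := Real.cos_eq_cos_iff.mp hcos
    -- π / 3^i = 3^(N-i) * u, odd multiple
    have hdi : π / 3 ^ i = (3:ℝ) ^ (N - i) * u := by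
      rw [hπu]
      rw [show (3:ℝ)^N = 3^(N-i) * 3^i by rw [← pow_add]; congr 1; omega]
      field_simp
    obtain ⟨m, hm⟩ : Odd ((3:ℤ) ^ (N - i)) := Odd.pow (by decide)
    have hm' : ((3:ℝ)) ^ (N - i) = 2 * (m:ℝ) + 1 := by
      exact_mod_cast congrArg (Int.cast : ℤ → ℝ) (by linarith [hm] : (3:ℤ)^(N-i) = 2*m+1)
    -- get (α - β)/(2u) = K + 1/2
    have hKhalf : ∃ K : ℤ, (α - β) / (2 * u) = K + 1/2 := by
      rcases hk with hk | hk
      · refine ⟨-(k * 3 ^ N) + m, ?_⟩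
        have : α - β = π / 3 ^ i - 2 * k * π := by linarith
        rw [this, hdi, hm', hπu]
        push_cast
        field_simp
        ring
      · refine ⟨k * 3 ^ N - m - 1, ?_⟩
        have : α - β = 2 * k * π - π / 3 ^ i := by linarith
        rw [this, hdi, hm', hπu]
        push_cast
        field_simp
        ring
    obtain ⟨K, hK⟩ := hKhalf
    have hax : Int.fract (α / (2*u)) < 1/2 := hx.2
    have hbx : Int.fract (β / (2*u)) < 1/2 := hy.2
    have ha0 : 0 ≤ Int.fract (α / (2*u)) := Int.fract_nonneg _
    have hb0 : 0 ≤ Int.fract (β / (2*u)) := Int.fract_nonneg _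
    have hsub : (α - β) / (2*u)
        = ((⌊α/(2*u)⌋ : ℝ) - ⌊β/(2*u)⌋) + (Int.fract (α/(2*u)) - Int.fract (β/(2*u))) := by
      rw [sub_div]
      have h1 := Int.floor_add_fract (α/(2*u))
      have h2 := Int.floor_add_fract (β/(2*u))
      linarith
    rw [hsub] at hK
    set K' : ℤ := K - ⌊α/(2*u)⌋ + ⌊β/(2*u)⌋ with hK'_def
    have hfinal : Int.fract (α/(2*u)) - Int.fract (β/(2*u)) = (K':ℝ) + 1/2 := by
      rw [hK'_def]; push_cast; linarith
    have hlow : (-1:ℝ) < K' := by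
      have : (K':ℝ) + 1/2 < 1/2 := by rw [← hfinal]; linarith
      linarith
    have hhigh : (K':ℝ) < 0 := by
      have : (-1/2:ℝ) < (K':ℝ) + 1/2 := by rw [← hfinal]; linarith
      linarith
    have : (-1:ℤ) < K' ∧ K' < 0 := ⟨by exact_mod_cast hlow, by exact_mod_cast hhigh⟩
    omega
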